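/- Nonnegativity and tightness of the penalty on the relaxed set: fix an edge set E and k ∈ {1,2,3} with C_1 the PSD cone, C_2 = C2(E), C_3 = C3(E). Let M be Hermitian with tr(H M) ≥ 0 for all H ∈ C_k (i.e., M is in the dual cone D_k), and let x0 = (v0, p0 + i·q0, s⃗0, s⃖0). Suppose W − v v* ∈ C_k, o_g ≥ p_g² and r_g ≥ q_g² for all g, f⃗_l ≥ |s⃗_l|² and f⃖_l ≥ |s⃖_l|² for all l. Then κ_{M,x0}(W, o, r, f⃗, f⃖, v, p + i·q, s⃗, s⃖) = tr((W − v v*) M) + (v − v0)* M (v − v0) + Σ_g (o_g − p_g²) + Σ_g (r_g − q_g²) + Σ_l (f⃗_l − |s⃗_l|²) + Σ_l (f⃖_l − |s⃖_l|²) + ‖p − p0‖₂² + ‖q − q0‖₂² + ‖s⃗ − s⃗0‖₂² + ‖s⃖ − s⃖0‖₂² ≥ 0; moreover κ_{M,x0} = 0 implies o = p², r = q², f⃗ = |s⃗|², f⃖ = |s⃖|² (entrywise), p = p0, q = q0, s⃗ = s⃗0, s⃖ = s⃖0, and tr((W − v v*) M) = 0. -/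

import Mathlib

open Matrix Finset
open scoped ComplexConjugate ComplexOrder

/-- The PSD cone `C1`. -/
def PSDCone (n : ℕ) : Set (Matrix (Fin n) (Fin n) ℂ) := {H | H.PosSemidef}

/-- The SOCP cone `C2(E)`. -/
def SOCPCone (n : ℕ) (E : Set (Fin n × Fin n)) : Set (Matrix (Fin n) (Fin n) ℂ) :=
  {H | H.IsHermitian ∧ (∀ i, 0 ≤ (H i i).re) ∧
    ∀ e ∈ E, Complex.normSq (H e.1 e.2) ≤ (H e.1 e.1).re * (H e.2 e.2).re}

/-- The parabolic cone `C3(E)`. -/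
def ParabolicCone (n : ℕ) (E : Set (Fin n × Fin n)) : Set (Matrix (Fin n) (Fin n) ℂ) :=
  {H | H.IsHermitian ∧ (∀ i, 0 ≤ (H i i).re) ∧
    ∀ e ∈ E, 2 * |(H e.1 e.2).re| ≤ (H e.1 e.1).re + (H e.2 e.2).re ∧
      2 * |(H e.1 e.2).im| ≤ (H e.1 e.1).re + (H e.2 e.2).re}

/-- The rank-one Hermitian matrix `v v*`. -/
noncomputable def outerC {n : ℕ} (v : Fin n → ℂ) : Matrix (Fin n) (Fin n) ℂ :=
  Matrix.vecMulVec v (star v)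

/-- The penalty function `κ_{M,x0}`. -/
noncomputable def penalty {n m t : ℕ} (M : Matrix (Fin n) (Fin n) ℂ)
    (v0 : Fin n → ℂ) (p0 q0 : Fin m → ℝ) (sf0 st0 : Fin t → ℂ)
    (W : Matrix (Fin n) (Fin n) ℂ) (o r : Fin m → ℝ) (ff ft : Fin t → ℝ)
    (v : Fin n → ℂ) (p q : Fin m → ℝ) (sf st : Fin t → ℂ) : ℝ :=
  ((∑ g, o g) - 2 * (∑ g, p0 g * p g) + (∑ g, p0 g ^ 2))
  + ((∑ g, r g) - 2 * (∑ g, q0 g * q g) + (∑ g, q0 g ^ 2))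
  + ((∑ l, ff l) - ((∑ l, conj (sf0 l) * sf l) + (∑ l, conj (sf l) * sf0 l)).re
      + ((∑ l, conj (sf0 l) * sf0 l)).re)
  + ((∑ l, ft l) - ((∑ l, conj (st0 l) * st l) + (∑ l, conj (st l) * st0 l)).re
      + ((∑ l, conj (st0 l) * st0 l)).re)
  + (((W * M).trace).re - (star v0 ⬝ᵥ M *ᵥ v + star v ⬝ᵥ M *ᵥ v0).re
      + (star v0 ⬝ᵥ M *ᵥ v0).re)

lemma outerC_posSemidef {n : ℕ} (v : Fin n → ℂ) : (outerC v).PosSemidef := by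
  have : outerC v = replicateCol Unit v * (replicateCol Unit v)ᴴ := by
    rw [outerC, Matrix.vecMulVec_eq Unit, Matrix.conjTranspose_replicateCol]
  rw [this]
  exact Matrix.posSemidef_self_mul_conjTranspose _

lemma outerC_apply {n : ℕ} (v : Fin n → ℂ) (i j) : outerC v i j = v i * conj (v j) := rfl

lemma trace_outer {n : ℕ} (v : Fin n → ℂ) (M : Matrix (Fin n) (Fin n) ℂ) :
    (outerC v * M).trace = star v ⬝ᵥ M *ᵥ v := by
  simp only [Matrix.trace, Matrix.diag, Matrix.mul_apply, outerC, Matrix.vecMulVec_apply,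
    dotProduct, Matrix.mulVec, Pi.star_apply, Finset.mul_sum]
  rw [Finset.sum_comm]
  exact Finset.sum_congr rfl fun i _ => Finset.sum_congr rfl fun j _ => by
    simp [RCLike.star_def]; ring

lemma outerC_diag_re {n : ℕ} (v : Fin n → ℂ) (i) : (outerC v i i).re = Complex.normSq (v i) := by
  rw [outerC_apply, Complex.mul_conj]; simp

lemma abs_re_mul_conj {a b : ℂ} : |(a * conj b).re| ≤ ‖a‖ * ‖b‖ := by
  calc |(a * conj b).re| ≤ ‖a * conj b‖ := Complex.abs_re_le_norm _
    _ = ‖a‖ * ‖b‖ := by rw [norm_mul, Complex.norm_conj]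

lemma abs_im_mul_conj {a b : ℂ} : |(a * conj b).im| ≤ ‖a‖ * ‖b‖ := by
  calc |(a * conj b).im| ≤ ‖a * conj b‖ := Complex.abs_im_le_norm _
    _ = ‖a‖ * ‖b‖ := by rw [norm_mul, Complex.norm_conj]

lemma outerC_mem {n : ℕ} (E : Set (Fin n × Fin n)) (C : Set (Matrix (Fin n) (Fin n) ℂ))
    (hC : C = PSDCone n ∨ C = SOCPCone n E ∨ C = ParabolicCone n E) (v : Fin n → ℂ) :
    outerC v ∈ C := by
  rcases hC with h | h | h <;> subst h
  · exact outerC_posSemidef v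
  · refine ⟨(outerC_posSemidef v).1, fun i => by
      rw [outerC_diag_re]; exact Complex.normSq_nonneg _, fun e _ => ?_⟩
    rw [outerC_diag_re, outerC_diag_re, outerC_apply, Complex.normSq_mul, Complex.normSq_conj]
  · refine ⟨(outerC_posSemidef v).1, fun i => by
      rw [outerC_diag_re]; exact Complex.normSq_nonneg _, fun e _ => ?_⟩
    rw [outerC_diag_re, outerC_diag_re, ← Complex.sq_norm, ← Complex.sq_norm]
    have h1 := abs_re_mul_conj (a := v e.1) (b := v e.2)
    have h2 := abs_im_mul_conj (a := v e.1) (b := v e.2)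
    have h3 := sq_nonneg (‖v e.1‖ - ‖v e.2‖)
    rw [outerC_apply]
    constructor <;> nlinarith

lemma sum_sq_expand {m : ℕ} (p p0 : Fin m → ℝ) :
    ∑ g, (p g - p0 g) ^ 2
      = (∑ g, p g ^ 2) - 2 * (∑ g, p0 g * p g) + ∑ g, p0 g ^ 2 := by
  rw [Finset.sum_congr rfl
    (fun g _ => by ring : ∀ g ∈ Finset.univ,
      (p g - p0 g) ^ 2 = p g ^ 2 - 2 * (p0 g * p g) + p0 g ^ 2),
    Finset.sum_add_distrib, Finset.sum_sub_distrib, ← Finset.mul_sum]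

lemma sum_normSq_expand {t : ℕ} (s s0 : Fin t → ℂ) :
    ∑ l, Complex.normSq (s l - s0 l)
      = (∑ l, Complex.normSq (s l))
        - ((∑ l, conj (s0 l) * s l) + (∑ l, conj (s l) * s0 l)).re
        + ((∑ l, conj (s0 l) * s0 l)).re := by
  have key : ∀ l ∈ Finset.univ, Complex.normSq (s l - s0 l)
      = Complex.normSq (s l) - ((conj (s0 l) * s l).re + (conj (s l) * s0 l).re)
        + (conj (s0 l) * s0 l).re := fun l _ => by
    simp only [Complex.normSq_apply, Complex.mul_re, Complex.conj_re, Complex.conj_im,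
      Complex.sub_re, Complex.sub_im]
    ring
  rw [Finset.sum_congr rfl key, Finset.sum_add_distrib, Finset.sum_sub_distrib,
    Finset.sum_add_distrib, Complex.add_re, Complex.re_sum, Complex.re_sum, Complex.re_sum]

/-- Nonnegativity and tightness of the penalty on the relaxed set: whenever `W − v v*`
lies in one of the cones `C1, C2(E), C3(E)`, `M` lies in the corresponding dual cone,
and `o ≥ p²`, `r ≥ q²`, `f⃗ ≥ |s⃗|²`, `f⃖ ≥ |s⃖|²` hold entrywise, the penalty equals the
displayed sum of nonnegative terms, is nonnegative, and can vanish only when all the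
displayed slack terms vanish. -/
theorem penalty_nonneg_and_tight {n m t : ℕ}
    (E : Set (Fin n × Fin n)) (hE : ∀ e ∈ E, e.1 ≠ e.2)
    (C : Set (Matrix (Fin n) (Fin n) ℂ))
    (hC : C = PSDCone n ∨ C = SOCPCone n E ∨ C = ParabolicCone n E)
    (M : Matrix (Fin n) (Fin n) ℂ) (hM : M.IsHermitian)
    (hdual : ∀ H ∈ C, 0 ≤ ((H * M).trace).re)
    (v0 : Fin n → ℂ) (p0 q0 : Fin m → ℝ) (sf0 st0 : Fin t → ℂ)
    (W : Matrix (Fin n) (Fin n) ℂ) (o r : Fin m → ℝ) (ff ft : Fin t → ℝ)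
    (v : Fin n → ℂ) (p q : Fin m → ℝ) (sf st : Fin t → ℂ)
    (hcone : W - outerC v ∈ C)
    (ho : ∀ g, p g ^ 2 ≤ o g) (hr : ∀ g, q g ^ 2 ≤ r g)
    (hff : ∀ l, Complex.normSq (sf l) ≤ ff l)
    (hft : ∀ l, Complex.normSq (st l) ≤ ft l) :
    (penalty M v0 p0 q0 sf0 st0 W o r ff ft v p q sf st =
        (((W - outerC v) * M).trace).re + (star (v - v0) ⬝ᵥ M *ᵥ (v - v0)).re
          + (∑ g, (o g - p g ^ 2)) + (∑ g, (r g - q g ^ 2))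
          + (∑ l, (ff l - Complex.normSq (sf l))) + (∑ l, (ft l - Complex.normSq (st l)))
          + (∑ g, (p g - p0 g) ^ 2) + (∑ g, (q g - q0 g) ^ 2)
          + (∑ l, Complex.normSq (sf l - sf0 l)) + (∑ l, Complex.normSq (st l - st0 l))) ∧
    (0 ≤ penalty M v0 p0 q0 sf0 st0 W o r ff ft v p q sf st) ∧
    (penalty M v0 p0 q0 sf0 st0 W o r ff ft v p q sf st = 0 →
      (o = fun g => p g ^ 2) ∧ (r = fun g => q g ^ 2) ∧
      (ff = fun l => Complex.normSq (sf l)) ∧ (ft = fun l => Complex.normSq (st l)) ∧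
      p = p0 ∧ q = q0 ∧ sf = sf0 ∧ st = st0 ∧
      (((W - outerC v) * M).trace).re = 0) := by
  -- matrix pieces
  have htr : (((W - outerC v) * M).trace).re = ((W * M).trace).re - (star v ⬝ᵥ M *ᵥ v).re := by
    rw [Matrix.sub_mul, Matrix.trace_sub, trace_outer, Complex.sub_re]
  have hquad : (star (v - v0) ⬝ᵥ M *ᵥ (v - v0)).re
      = (star v ⬝ᵥ M *ᵥ v).re - (star v0 ⬝ᵥ M *ᵥ v).re
        - (star v ⬝ᵥ M *ᵥ v0).re + (star v0 ⬝ᵥ M *ᵥ v0).re := by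
    have : star (v - v0) ⬝ᵥ M *ᵥ (v - v0)
        = star v ⬝ᵥ M *ᵥ v - star v0 ⬝ᵥ M *ᵥ v - star v ⬝ᵥ M *ᵥ v0 + star v0 ⬝ᵥ M *ᵥ v0 := by
      rw [star_sub, Matrix.mulVec_sub, sub_dotProduct, dotProduct_sub,
        dotProduct_sub]
      ring
    rw [this, Complex.add_re, Complex.sub_re, Complex.sub_re]
  have hident : penalty M v0 p0 q0 sf0 st0 W o r ff ft v p q sf st =
        (((W - outerC v) * M).trace).re + (star (v - v0) ⬝ᵥ M *ᵥ (v - v0)).re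
          + (∑ g, (o g - p g ^ 2)) + (∑ g, (r g - q g ^ 2))
          + (∑ l, (ff l - Complex.normSq (sf l))) + (∑ l, (ft l - Complex.normSq (st l)))
          + (∑ g, (p g - p0 g) ^ 2) + (∑ g, (q g - q0 g) ^ 2)
          + (∑ l, Complex.normSq (sf l - sf0 l)) + (∑ l, Complex.normSq (st l - st0 l)) := by
    rw [htr, hquad, penalty, sum_sq_expand, sum_sq_expand, sum_normSq_expand, sum_normSq_expand,
      Finset.sum_sub_distrib, Finset.sum_sub_distrib, Finset.sum_sub_distrib,
      Finset.sum_sub_distrib]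
    simp only [Complex.add_re]
    ring
  -- nonnegativity of each piece
  have hT : 0 ≤ (((W - outerC v) * M).trace).re := hdual _ hcone
  have hQ : 0 ≤ (star (v - v0) ⬝ᵥ M *ᵥ (v - v0)).re := by
    have := hdual _ (outerC_mem E C hC (v - v0))
    rwa [trace_outer] at this
  have h1 : 0 ≤ ∑ g, (o g - p g ^ 2) :=
    Finset.sum_nonneg fun g _ => sub_nonneg.2 (ho g)
  have h2 : 0 ≤ ∑ g, (r g - q g ^ 2) :=
    Finset.sum_nonneg fun g _ => sub_nonneg.2 (hr g)
  have h3 : 0 ≤ ∑ l, (ff l - Complex.normSq (sf l)) :=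
    Finset.sum_nonneg fun l _ => sub_nonneg.2 (hff l)
  have h4 : 0 ≤ ∑ l, (ft l - Complex.normSq (st l)) :=
    Finset.sum_nonneg fun l _ => sub_nonneg.2 (hft l)
  have h5 : 0 ≤ ∑ g, (p g - p0 g) ^ 2 := Finset.sum_nonneg fun g _ => sq_nonneg _
  have h6 : 0 ≤ ∑ g, (q g - q0 g) ^ 2 := Finset.sum_nonneg fun g _ => sq_nonneg _
  have h7 : 0 ≤ ∑ l, Complex.normSq (sf l - sf0 l) :=
    Finset.sum_nonneg fun l _ => Complex.normSq_nonneg _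
  have h8 : 0 ≤ ∑ l, Complex.normSq (st l - st0 l) :=
    Finset.sum_nonneg fun l _ => Complex.normSq_nonneg _
  refine ⟨hident, by rw [hident]; positivity, fun hzero => ?_⟩
  rw [hident] at hzero
  have e1 : ∑ g, (o g - p g ^ 2) = 0 := by linarith
  have e2 : ∑ g, (r g - q g ^ 2) = 0 := by linarith
  have e3 : ∑ l, (ff l - Complex.normSq (sf l)) = 0 := by linarith
  have e4 : ∑ l, (ft l - Complex.normSq (st l)) = 0 := by linarith
  have e5 : ∑ g, (p g - p0 g) ^ 2 = 0 := by linarith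
  have e6 : ∑ g, (q g - q0 g) ^ 2 = 0 := by linarith
  have e7 : ∑ l, Complex.normSq (sf l - sf0 l) = 0 := by linarith
  have e8 : ∑ l, Complex.normSq (st l - st0 l) = 0 := by linarith
  have eT : (((W - outerC v) * M).trace).re = 0 := by linarith
  have z1 := (Finset.sum_eq_zero_iff_of_nonneg
    (fun g _ => sub_nonneg.2 (ho g))).1 e1
  have z2 := (Finset.sum_eq_zero_iff_of_nonneg
    (fun g _ => sub_nonneg.2 (hr g))).1 e2
  have z3 := (Finset.sum_eq_zero_iff_of_nonneg
    (fun l _ => sub_nonneg.2 (hff l))).1 e3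
  have z4 := (Finset.sum_eq_zero_iff_of_nonneg
    (fun l _ => sub_nonneg.2 (hft l))).1 e4
  have z5 := (Finset.sum_eq_zero_iff_of_nonneg
    (fun g _ => sq_nonneg (p g - p0 g))).1 e5
  have z6 := (Finset.sum_eq_zero_iff_of_nonneg
    (fun g _ => sq_nonneg (q g - q0 g))).1 e6
  have z7 := (Finset.sum_eq_zero_iff_of_nonneg
    (fun l _ => Complex.normSq_nonneg (sf l - sf0 l))).1 e7
  have z8 := (Finset.sum_eq_zero_iff_of_nonneg
    (fun l _ => Complex.normSq_nonneg (st l - st0 l))).1 e8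
  refine ⟨funext fun g => ?_, funext fun g => ?_, funext fun l => ?_, funext fun l => ?_,
    funext fun g => ?_, funext fun g => ?_, funext fun l => ?_, funext fun l => ?_, eT⟩
  · have := z1 g (Finset.mem_univ g); linarith
  · have := z2 g (Finset.mem_univ g); linarith
  · have := z3 l (Finset.mem_univ l); linarith
  · have := z4 l (Finset.mem_univ l); linarith
  · exact sub_eq_zero.1 (sq_eq_zero_iff.1 (z5 g (Finset.mem_univ g)))
  · exact sub_eq_zero.1 (sq_eq_zero_iff.1 (z6 g (Finset.mem_univ g)))
  · exact sub_eq_zero.1 (Complex.normSq_eq_zero.1 (z7 l (Finset.mem_univ l)))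
  · exact sub_eq_zero.1 (Complex.normSq_eq_zero.1 (z8 l (Finset.mem_univ l)))
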